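/- Let E be a countable type, let μ be a probability mass function on E, let A be a finite nonempty type with cardinality N, let φ : E → A be any map, and let ω > 0. Let 𝓔 = {w ∈ E : μ(w) ≥ e^ω / N}. Then d_TV(φ_*μ, π_A) ≥ μ(𝓔) − e^{−ω}, where φ_*μ is the pushforward probability mass function on A, given by (φ_*μ)(x) = ∑_{w : φ(w) = x} μ(w), and π_A is the uniform distribution on A. -/

import Mathlib

open scoped ENNReal

/-- for a pushforward `φ_*μ` of a probability mass function `μ` on a countable
set to a finite set `A` of cardinality `N`, with `𝓔 = {w : μ(w) ≥ e^ω/N}`, one has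
`d_TV(φ_*μ, π_A) ≥ μ(𝓔) − e^{−ω}`. -/
theorem stmt_7 {E : Type*} [Countable E] (μ : PMF E)
    {A : Type*} [Fintype A] [Nonempty A] (N : ℕ) (hN : Fintype.card A = N)
    (φ : E → A) (ω : ℝ) (hω : 0 < ω) :
    (1 / 2) * ∑ x, |((μ.map φ) x).toReal - 1 / N|
      ≥ (∑' w : {w : E // ENNReal.ofReal (Real.exp ω / N) ≤ μ w}, μ w.1).toReal
        - Real.exp (-ω) := by
  classical
  have hNpos : 0 < N := by
    rw [← hN]; exact Fintype.card_pos
  have hNR : (0:ℝ) < N := by exact_mod_cast hNpos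
  set ν : PMF A := μ.map φ with hνdef
  set a : A → ℝ := fun x => (ν x).toReal with ha
  have hνne : ∀ x, ν x ≠ ⊤ := fun x => ν.apply_ne_top x
  have ha_nonneg : ∀ x, 0 ≤ a x := fun x => ENNReal.toReal_nonneg
  have hsum_a : ∑ x, a x = 1 := by
    rw [ha, ← ENNReal.toReal_sum (fun x _ => hνne x)]
    rw [show ∑ x, ν x = ∑' x, ν x from (tsum_fintype _).symm, ν.tsum_coe]
    simp
  -- the "bad" set in A
  set S : Finset A := Finset.univ.filter
    (fun x => ENNReal.ofReal (Real.exp ω / N) ≤ ν x) with hS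
  -- μ(𝓔) ≤ ν(S) in ℝ≥0∞
  have hE : (∑' w : {w : E // ENNReal.ofReal (Real.exp ω / N) ≤ μ w}, μ w.1)
      ≤ ∑ x ∈ S, ν x := by
    have h1 : (∑' w : {w : E // ENNReal.ofReal (Real.exp ω / N) ≤ μ w}, μ w.1)
        = μ.toOuterMeasure {w | ENNReal.ofReal (Real.exp ω / N) ≤ μ w} := by
      rw [PMF.toOuterMeasure_apply, ← tsum_subtype]
      rfl
    have hsub : {w | ENNReal.ofReal (Real.exp ω / N) ≤ μ w}
        ⊆ φ ⁻¹' {x | ENNReal.ofReal (Real.exp ω / N) ≤ ν x} := by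
      intro w hw
      simp only [Set.mem_setOf_eq] at hw ⊢
      refine le_trans hw ?_
      rw [hνdef, PMF.map_apply]
      exact le_trans (le_of_eq (by simp)) (ENNReal.le_tsum w)
    have h2 : μ.toOuterMeasure {w | ENNReal.ofReal (Real.exp ω / N) ≤ μ w}
        ≤ ν.toOuterMeasure {x | ENNReal.ofReal (Real.exp ω / N) ≤ ν x} := by
      rw [hνdef, PMF.toOuterMeasure_map_apply]
      exact μ.toOuterMeasure.mono hsub
    have h3 : ν.toOuterMeasure {x | ENNReal.ofReal (Real.exp ω / N) ≤ ν x}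
        = ∑ x ∈ S, ν x := by
      rw [PMF.toOuterMeasure_apply, tsum_fintype, hS]
      rw [Finset.sum_filter]
      exact Finset.sum_congr rfl (fun x _ => by
        by_cases hx : ENNReal.ofReal (Real.exp ω / N) ≤ ν x <;>
          simp [Set.indicator, hx])
    rw [h1]; exact le_trans h2 (le_of_eq h3)
  have hEreal : (∑' w : {w : E // ENNReal.ofReal (Real.exp ω / N) ≤ μ w}, μ w.1).toReal
      ≤ ∑ x ∈ S, a x := by
    rw [ha, ← ENNReal.toReal_sum (fun x _ => hνne x)]
    exact ENNReal.toReal_mono (by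
      exact ENNReal.sum_ne_top.2 (fun x _ => hνne x)) hE
  -- members of S have a x ≥ exp ω / N
  have hSa : ∀ x ∈ S, Real.exp ω / N ≤ a x := by
    intro x hx
    rw [hS, Finset.mem_filter] at hx
    exact (ENNReal.ofReal_le_iff_le_toReal (hνne x)).1 hx.2
  -- cardinality bound
  have hsumS_le : ∑ x ∈ S, a x ≤ 1 := by
    rw [← hsum_a]
    exact Finset.sum_le_sum_of_subset_of_nonneg (Finset.subset_univ S)
      (fun x _ _ => ha_nonneg x)
  have hcard : (S.card : ℝ) * (Real.exp ω / N) ≤ 1 := by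
    calc (S.card : ℝ) * (Real.exp ω / N) = ∑ _x ∈ S, Real.exp ω / N := by
          rw [Finset.sum_const, nsmul_eq_mul]
      _ ≤ ∑ x ∈ S, a x := Finset.sum_le_sum hSa
      _ ≤ 1 := hsumS_le
  have hcardN : (S.card : ℝ) / N ≤ Real.exp (-ω) := by
    have h1 : (S.card : ℝ) * Real.exp ω ≤ N := by
      rw [← mul_div_assoc] at hcard
      exact (div_le_one hNR).1 hcard
    rw [Real.exp_neg, div_le_iff₀ hNR, inv_mul_eq_div, le_div_iff₀ (Real.exp_pos ω)]
    exact h1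
  -- key TV inequality
  have hkey : ∑ x ∈ S, (a x - 1 / N) ≤ (1 / 2) * ∑ x, |a x - 1 / N| := by
    have h0 : ∑ x, (a x - 1 / N) = 0 := by
      rw [Finset.sum_sub_distrib, hsum_a, Finset.sum_const, nsmul_eq_mul]
      rw [Finset.card_univ, hN]
      field_simp
      ring
    have hsplit : ∑ x ∈ S, (a x - 1/N) + ∑ x ∈ Finset.univ \ S, (a x - 1/N)
        = ∑ x, (a x - 1/N) := by
      rw [add_comm]
      exact Finset.sum_sdiff (Finset.subset_univ S)
    have h1 : ∑ x ∈ S, (a x - 1/N) ≤ ∑ x ∈ S, |a x - 1/N| :=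
      Finset.sum_le_sum (fun x _ => le_abs_self _)
    have h2 : -∑ x ∈ Finset.univ \ S, (a x - 1/N)
        ≤ ∑ x ∈ Finset.univ \ S, |a x - 1/N| := by
      rw [← Finset.sum_neg_distrib]
      exact Finset.sum_le_sum (fun x _ => neg_le_abs _)
    have h3 : ∑ x ∈ S, |a x - 1/N| + ∑ x ∈ Finset.univ \ S, |a x - 1/N|
        = ∑ x, |a x - 1/N| := by
      rw [← Finset.sum_sdiff (Finset.subset_univ S)]; ring
    have hneg : ∑ x ∈ Finset.univ \ S, (a x - 1/N) = -∑ x ∈ S, (a x - 1/N) := by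
      have := hsplit.trans h0
      linarith
    linarith
  have hfinal : ∑ x ∈ S, (a x - 1 / N)
      = ∑ x ∈ S, a x - (S.card : ℝ) / N := by
    rw [Finset.sum_sub_distrib, Finset.sum_const, nsmul_eq_mul]
    ring
  rw [ge_iff_le, ha] at *
  calc (∑' w : {w : E // ENNReal.ofReal (Real.exp ω / N) ≤ μ w}, μ w.1).toReal
        - Real.exp (-ω)
      ≤ ∑ x ∈ S, a x - (S.card : ℝ) / N := by linarith
    _ = ∑ x ∈ S, (a x - 1 / N) := hfinal.symm
    _ ≤ (1 / 2) * ∑ x, |a x - 1 / N| := hkey
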